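/- Let ω, ω₁, ω₂ be weight functions on ℝⁿ satisfying sup_{ξ∈ℝⁿ} ‖ω(ξ)/(ω₁(ξ−·)ω₂(·))‖_{L^q(ℝⁿ)} < ∞ for some 1 ≤ q < +∞. Then there exists a constant C > 0 such that ω(η+θ) ≤ C ω₁(η) ω₂(θ) for all η, θ ∈ ℝⁿ. In particular, if a weight function ω satisfies sup_{ξ∈ℝⁿ} ‖ω(ξ)/(ω(ξ−·)ω(·))‖_{L^q(ℝⁿ)} < ∞ for some 1 ≤ q < +∞, then ω satisfies the sub-multiplicative condition (SM). -/

import Mathlib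

open MeasureTheory
open scoped ENNReal

/-- The temperance condition (T). -/
def IsTemperate {n : ℕ} (ω : EuclideanSpace ℝ (Fin n) → ℝ) : Prop :=
  ∃ C N : ℝ, 0 < C ∧ 0 < N ∧ ∀ ξ η, ω ξ ≤ C * (1 + ‖ξ - η‖) ^ N * ω η

/-- A weight function: positive, measurable and temperate. -/
def IsWeight {n : ℕ} (ω : EuclideanSpace ℝ (Fin n) → ℝ) : Prop :=
  (∀ ξ, 0 < ω ξ) ∧ Measurable ω ∧ IsTemperate ω

/-- If the weight functions `ω, ω₁, ω₂` satisfy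
`sup_ξ ‖ω(ξ)/(ω₁(ξ-·) ω₂(·))‖_{L^q} < ∞` for some `1 ≤ q < ∞`, then
`ω(η+θ) ≤ C ω₁(η) ω₂(θ)` for all `η, θ` and a suitable `C > 0`.  (In particular, taking
`ω₁ = ω₂ = ω`, a weight satisfying the `L^q` condition with itself satisfies the
sub-multiplicative condition (SM).) -/
theorem weight_estimate_of_Lq_condition {n : ℕ}
    (ω ω₁ ω₂ : EuclideanSpace ℝ (Fin n) → ℝ)
    (hω : IsWeight ω) (hω₁ : IsWeight ω₁) (hω₂ : IsWeight ω₂)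
    (q : ℝ) (hq : 1 ≤ q)
    (hCq : (⨆ ξ, eLpNorm (fun η => ω ξ / (ω₁ (ξ - η) * ω₂ η)) (ENNReal.ofReal q) volume)
      < ⊤) :
    ∃ C : ℝ, 0 < C ∧ ∀ η θ, ω (η + θ) ≤ C * (ω₁ η * ω₂ θ) := by
  obtain ⟨hωpos, -, -⟩ := hω
  obtain ⟨hω₁pos, -, C₁, N₁, hC₁, hN₁, hT₁⟩ := hω₁
  obtain ⟨hω₂pos, -, C₂, N₂, hC₂, hN₂, hT₂⟩ := hω₂
  have hq0 : (0:ℝ) < q := lt_of_lt_of_le one_pos hq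
  set p : ℝ≥0∞ := ENNReal.ofReal q with hp
  have hp0 : p ≠ 0 := by
    simp only [hp, ne_eq, ENNReal.ofReal_eq_zero, not_le]; exact hq0
  have hptoReal : p.toReal = q := ENNReal.toReal_ofReal hq0.le
  set K : ℝ := (C₁ * 2 ^ N₁) * (C₂ * 2 ^ N₂) with hKdef
  have hKpos : 0 < K := by positivity
  set M := ⨆ ξ, eLpNorm (fun η => ω ξ / (ω₁ (ξ - η) * ω₂ η)) p volume with hM
  -- volume of the unit ball
  set v : ℝ≥0∞ := volume (Metric.ball (0 : EuclideanSpace ℝ (Fin n)) 1) ^ (1 / q) with hv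
  have hvball : 0 < volume (Metric.ball (0 : EuclideanSpace ℝ (Fin n)) 1) :=
    Metric.measure_ball_pos volume 0 one_pos
  have hvballfin : volume (Metric.ball (0 : EuclideanSpace ℝ (Fin n)) 1) < ⊤ :=
    measure_ball_lt_top
  have hv0 : v ≠ 0 := by
    simp only [hv]
    exact (ENNReal.rpow_pos hvball hvballfin.ne).ne'
  have hvtop : v ≠ ⊤ := by
    simp only [hv]
    exact ENNReal.rpow_ne_top_of_nonneg (by positivity) hvballfin.ne
  set B : ℝ≥0∞ := M / v with hB
  have hBtop : B ≠ ⊤ := by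
    simp only [hB]
    exact (ENNReal.div_lt_top hCq.ne hv0).ne
  refine ⟨B.toReal * K + 1, by positivity, fun η θ => ?_⟩
  set ξ := η + θ with hξ
  have hden : 0 < ω₁ η * ω₂ θ := mul_pos (hω₁pos η) (hω₂pos θ)
  set c : ℝ := ω ξ / (K * (ω₁ η * ω₂ θ)) with hc
  have hcpos : 0 < c := div_pos (hωpos ξ) (mul_pos hKpos hden)
  -- pointwise bound on the ball
  have hball : ∀ y ∈ Metric.ball θ 1, c ≤ ω ξ / (ω₁ (ξ - y) * ω₂ y) := by
    intro y hy
    have hdist : ‖θ - y‖ ≤ 1 := by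
      rw [Metric.mem_ball, dist_eq_norm] at hy
      rw [norm_sub_rev]; exact hy.le
    have h1 : ω₁ (ξ - y) ≤ C₁ * 2 ^ N₁ * ω₁ η := by
      have := hT₁ (ξ - y) η
      have heq : ξ - y - η = θ - y := by rw [hξ]; abel
      rw [heq] at this
      have hpow : (1 + ‖θ - y‖) ^ N₁ ≤ (2:ℝ) ^ N₁ :=
        Real.rpow_le_rpow (by positivity) (by linarith) hN₁.le
      exact this.trans (mul_le_mul_of_nonneg_right
        (mul_le_mul_of_nonneg_left hpow hC₁.le) (hω₁pos η).le)
    have h2 : ω₂ y ≤ C₂ * 2 ^ N₂ * ω₂ θ := by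
      have := hT₂ y θ
      have hdist' : ‖y - θ‖ ≤ 1 := by rw [norm_sub_rev]; exact hdist
      have hpow : (1 + ‖y - θ‖) ^ N₂ ≤ (2:ℝ) ^ N₂ :=
        Real.rpow_le_rpow (by positivity) (by linarith) hN₂.le
      exact this.trans (mul_le_mul_of_nonneg_right
        (mul_le_mul_of_nonneg_left hpow hC₂.le) (hω₂pos θ).le)

    have hprod : ω₁ (ξ - y) * ω₂ y ≤ K * (ω₁ η * ω₂ θ) := by
      have := mul_le_mul h1 h2 (hω₂pos y).le
        (mul_nonneg (by positivity) (hω₁pos η).le)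
      calc ω₁ (ξ - y) * ω₂ y ≤ (C₁ * 2 ^ N₁ * ω₁ η) * (C₂ * 2 ^ N₂ * ω₂ θ) := this
        _ = K * (ω₁ η * ω₂ θ) := by rw [hKdef]; ring
    rw [hc]
    gcongr
    · exact (hωpos ξ).le
    · exact mul_pos (hω₁pos (ξ - y)) (hω₂pos y)
  -- eLpNorm lower bound
  have key : ENNReal.ofReal c * v ≤ M := by
    have hmono : eLpNorm (fun _ : EuclideanSpace ℝ (Fin n) => c) p
        (volume.restrict (Metric.ball θ 1))
        ≤ eLpNorm (fun y => ω ξ / (ω₁ (ξ - y) * ω₂ y)) p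
        (volume.restrict (Metric.ball θ 1)) := by
      refine eLpNorm_mono_ae ?_
      refine (ae_restrict_iff' Metric.isOpen_ball.measurableSet).2 (ae_of_all _ fun y hy => ?_)
      rw [Real.norm_of_nonneg hcpos.le]
      exact (hball y hy).trans (le_abs_self _)
    have hconst : eLpNorm (fun _ : EuclideanSpace ℝ (Fin n) => c) p
        (volume.restrict (Metric.ball θ 1)) = ENNReal.ofReal c * v := by
      have hμ : volume.restrict (Metric.ball θ 1) ≠ 0 := by
        intro h
        have hb := Metric.measure_ball_pos volume θ one_pos
        rw [← Measure.restrict_apply_univ, h] at hb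
        simp at hb
      rw [eLpNorm_const c hp0 hμ, Measure.restrict_apply_univ, hptoReal,
        Measure.addHaar_ball_center, ← ofReal_norm,
        Real.norm_of_nonneg hcpos.le, hv]
    have hrest : eLpNorm (fun y => ω ξ / (ω₁ (ξ - y) * ω₂ y)) p
        (volume.restrict (Metric.ball θ 1))
        ≤ eLpNorm (fun y => ω ξ / (ω₁ (ξ - y) * ω₂ y)) p volume :=
      eLpNorm_mono_measure _ Measure.restrict_le_self
    calc ENNReal.ofReal c * v = _ := hconst.symm
      _ ≤ _ := hmono
      _ ≤ _ := hrest
      _ ≤ M := le_iSup (fun ξ' => eLpNorm (fun y => ω ξ' / (ω₁ (ξ' - y) * ω₂ y)) p volume) ξ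
  have hcB : c ≤ B.toReal := by
    rw [← ENNReal.ofReal_le_iff_le_toReal hBtop, hB, ENNReal.le_div_iff_mul_le (Or.inl hv0)
      (Or.inl hvtop)]
    exact key
  -- conclude
  have : ω ξ ≤ B.toReal * K * (ω₁ η * ω₂ θ) := by
    have := mul_le_mul_of_nonneg_right hcB (le_of_lt (mul_pos hKpos hden))
    rw [hc, div_mul_eq_mul_div, mul_div_assoc, div_self (mul_pos hKpos hden).ne', mul_one]
      at this
    calc ω ξ ≤ B.toReal * (K * (ω₁ η * ω₂ θ)) := this
      _ = B.toReal * K * (ω₁ η * ω₂ θ) := by ring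
  calc ω (η + θ) = ω ξ := rfl
    _ ≤ B.toReal * K * (ω₁ η * ω₂ θ) := this
    _ ≤ (B.toReal * K + 1) * (ω₁ η * ω₂ θ) := by nlinarith [ENNReal.toReal_nonneg (a := B)]
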